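/- Every unital star-algebra homomorphism Ψ : C(Y, ℂ) → C(X, ℂ) between algebras of continuous functions on compact Hausdorff spaces is of the form g ↦ g ∘ f for a unique continuous map f : X → Y. -/

import Mathlib

open WeakDual.CharacterSpace

theorem stmt_4 {X Y : Type*} [TopologicalSpace X] [CompactSpace X] [T2Space X]
    [TopologicalSpace Y] [CompactSpace Y] [T2Space Y]
    (Ψ : C(Y, ℂ) →⋆ₐ[ℂ] C(X, ℂ)) :
    ∃! f : C(X, Y), ∀ g : C(Y, ℂ), Ψ g = g.comp f := by
  refine ⟨(((homeoEval Y ℂ).symm : C(_, _)).comp (compContinuousMap Ψ)).comp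
      ((homeoEval X ℂ) : C(_, _)), fun g => ?_, fun f' hf' => ?_⟩
  case _ =>
    ext x
    have h : (homeoEval Y ℂ) ((homeoEval Y ℂ).symm (compContinuousMap Ψ (homeoEval X ℂ x))) =
        compContinuousMap Ψ (homeoEval X ℂ x) := (homeoEval Y ℂ).apply_symm_apply _
    exact (congrArg (fun χ : WeakDual.characterSpace ℂ C(Y, ℂ) => χ g) h).symm
  case _ =>
    ext x
    apply (homeoEval Y ℂ).injective
    apply Subtype.ext
    apply ContinuousLinearMap.ext
    intro g
    have h1 := congrFun (congrArg (fun k : C(X,ℂ) => (k : X → ℂ)) (hf' g)) x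
    have h : (homeoEval Y ℂ) ((homeoEval Y ℂ).symm (compContinuousMap Ψ (homeoEval X ℂ x))) =
        compContinuousMap Ψ (homeoEval X ℂ x) := (homeoEval Y ℂ).apply_symm_apply _
    have h2 := congrArg (fun χ : WeakDual.characterSpace ℂ C(Y, ℂ) => χ g) h
    show g (f' x) = _
    simp only [ContinuousMap.comp_apply, ContinuousMap.coe_coe] at h1 h2 ⊢
    exact h1.symm.trans h2.symm
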